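/- For the distribution P of the previous context, the mutual informations satisfy I(P_{2,3}) = I(P_{1,3}) for all (ξ,κ) ∈ (0,1/3)×(0,1/2), and for sufficiently small κ > 0, I(P_{1,2}) > I(P_{2,3}). -/

import Mathlib

open Filter Topology

lemma tendsto_term (p q : ℝ → ℝ) (a c b : ℝ) (hp : Continuous p) (hq : Continuous q)
    (ha : p 0 = a) (hc : q 0 = c) (hb : a / c = b) (hbpos : 0 < b) :
    Filter.Tendsto (fun κ => p κ * Real.log (p κ / q κ)) (𝓝[>] (0:ℝ)) (𝓝 (a * Real.log b)) := by
  have hb' : p 0 / q 0 = b := by rw [ha, hc, hb]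
  have hq0 : q 0 ≠ 0 := by
    intro h
    rw [h, div_zero] at hb'
    exact hbpos.ne' hb'.symm
  have hcont : ContinuousAt (fun κ => p κ * Real.log (p κ / q κ)) 0 := by
    apply hp.continuousAt.mul
    have hdiv : ContinuousAt (fun κ => p κ / q κ) 0 := hp.continuousAt.div hq.continuousAt hq0
    exact ContinuousAt.comp (Real.continuousAt_log (by show p 0 / q 0 ≠ 0; rw [hb']; exact hbpos.ne')) hdiv
  have h2 := hcont.tendsto.mono_left (nhdsWithin_le_nhds : 𝓝[>] (0:ℝ) ≤ 𝓝 0)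
  rw [hb', ha] at h2
  exact h2

lemma tendsto_term1 (p q : ℝ → ℝ) (a : ℝ) (hp : Continuous p) (hq : Continuous q)
    (ha : p 0 = a) (hapos : 0 < a) (hqp : q 0 = p 0) :
    Filter.Tendsto (fun κ => p κ * Real.log (p κ / q κ)) (𝓝[>] (0:ℝ)) (𝓝 0) := by
  have hp0 : 0 < p 0 := ha ▸ hapos
  have h := tendsto_term p q (p 0) (p 0) 1 hp hq rfl hqp (div_self hp0.ne') one_pos
  simpa using h

lemma tendsto_term0 (p q : ℝ → ℝ) (c : ℝ) (hpid : ∀ x, p x = x) (hq : Continuous q)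
    (hc : q 0 = c) (hcpos : 0 < c) :
    Filter.Tendsto (fun κ => p κ * Real.log (p κ / q κ)) (𝓝[>] (0:ℝ)) (𝓝 0) := by
  have hq0 : (0:ℝ) < q 0 := hc ▸ hcpos
  have hqever : ∀ᶠ κ in 𝓝[>] (0:ℝ), q κ ≠ 0 :=
    (hq.continuousAt.eventually_ne hq0.ne').filter_mono nhdsWithin_le_nhds
  have hpos : ∀ᶠ κ in 𝓝[>] (0:ℝ), κ ∈ Set.Ioi (0:ℝ) := eventually_mem_nhdsWithin
  have h1 : Filter.Tendsto (fun κ : ℝ => κ * Real.log κ) (𝓝[>] (0:ℝ)) (𝓝 0) := by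
    have := (Real.continuous_mul_log.tendsto 0).mono_left (nhdsWithin_le_nhds : 𝓝[>] (0:ℝ) ≤ 𝓝 0)
    simpa using this
  have h2 : Filter.Tendsto (fun κ : ℝ => κ * Real.log (q κ)) (𝓝[>] (0:ℝ)) (𝓝 0) := by
    have hcont : ContinuousAt (fun κ : ℝ => κ * Real.log (q κ)) 0 :=
      continuousAt_id.mul (ContinuousAt.comp (Real.continuousAt_log hq0.ne') hq.continuousAt)
    simpa using hcont.tendsto.mono_left (nhdsWithin_le_nhds : 𝓝[>] (0:ℝ) ≤ 𝓝 0)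
  have h3 : Filter.Tendsto (fun κ : ℝ => κ * Real.log κ - κ * Real.log (q κ)) (𝓝[>] (0:ℝ)) (𝓝 0) := by
    simpa using h1.sub h2
  apply h3.congr'
  filter_upwards [hqever, hpos] with κ hqκ hκ
  rw [hpid κ, Real.log_div (ne_of_gt hκ) hqκ]
  ring

theorem key_lemma (ξ : ℝ) (hξ1 : 0 < ξ) (hξ2 : ξ < 1 / 3) :
    ∃ κ0 ∈ Set.Ioc (0:ℝ) (1 / 2), ∀ κ ∈ Set.Ioo (0:ℝ) κ0,
      ((1 / 2 + ξ) * (1 / 2 - κ) + (2 / 3 - ξ) * κ) * Real.log (((1 / 2 + ξ) * (1 / 2 - κ) + (2 / 3 - ξ) * κ) / (((1 / 2 + ξ) * (1 / 2 - κ) + (2 / 3 - ξ) * κ + ((1 / 2 - ξ) * (1 / 2 - κ) + (1 / 3 + ξ) * κ)) * ((1 / 2 + ξ) * (1 / 2 - κ) + (2 / 3 - ξ) * κ + ((1 / 3 + ξ) * κ + (1 / 2 + ξ) * (1 / 2 - κ))))) + ((1 / 2 - ξ) * (1 / 2 - κ) + (1 / 3 + ξ) * κ) * Real.log (((1 / 2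 - ξ) * (1 / 2 - κ) + (1 / 3 + ξ) * κ) / (((1 / 2 + ξ) * (1 / 2 - κ) + (2 / 3 - ξ) * κ + ((1 / 2 - ξ) * (1 / 2 - κ) + (1 / 3 + ξ) * κ)) * ((1 / 2 - ξ) * (1 / 2 - κ) + (1 / 3 + ξ) * κ + ((2 / 3 - ξ) * κ + (1 / 2 - ξ) * (1 / 2 - κ))))) + (((1 / 3 + ξ) * κ + (1 / 2 + ξ) * (1 / 2 - κ)) * Real.log (((1 / 3 + ξ) * κ + (1 / 2 + ξ) * (1 / 2 - κ)) / (((1 / 3 + ξ) * κ + (1 / 2 + ξ) * (1 / 2 - κ) + ((2 / 3 - ξ) * κ + (1 / 2 - ξ) * (1 / 2 - κ))) * ((1 / 2 + ξ) * (1 / 2 - κ) + (2 / 3 - ξ) * κ + ((1 / 3 + ξ) * κ + (1 / 2 + ξ) * (1 / 2 - κ))))) + ((2 / 3 - ξ) * κ + (1 / 2 - ξ) * (1 / 2 - κ)) * Real.log (((2 / 3 - ξ) * κ + (1 / 2 - ξ) * (1 / 2 - κ)) / (((1 / 3 + ξ) * κ + (1 / 2 + ξ) * (1 / 2 - κ)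 + ((2 / 3 - ξ) * κ + (1 / 2 - ξ) * (1 / 2 - κ))) * ((1 / 2 - ξ) * (1 / 2 - κ) + (1 / 3 + ξ) * κ + ((2 / 3 - ξ) * κ + (1 / 2 - ξ) * (1 / 2 - κ)))))) < ((1 / 2 + ξ) * (1 / 2 - κ) + (1 / 2 - ξ) * (1 / 2 - κ)) * Real.log (((1 / 2 + ξ) * (1 / 2 - κ) + (1 / 2 - ξ) * (1 / 2 - κ)) / (((1 / 2 + ξ) * (1 / 2 - κ) + (1 / 2 - ξ) * (1 / 2 - κ) + ((1 / 3 + ξ) * κ + (2 / 3 - ξ) * κ)) * ((1 / 2 + ξ) * (1 / 2 - κ) + (1 / 2 - ξ) * (1 / 2 - κ) + ((2 / 3 - ξ) * κ + (1 / 3 + ξ) * κ)))) + ((1 / 3 + ξ) * κ + (2 / 3 - ξ) * κ) * Real.log (((1 / 3 + ξ) * κ + (2 / 3 - ξ) * κ) / (((1 / 2 + ξ) * (1 / 2 - κ) + (1 / 2 - ξ) * (1 / 2 - κ) + ((1 / 3 + ξ) * κ + (2 / 3 - ξ) * κ)) * ((1 / 3 + ξ) * κ + (2 / 3 - ξ)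 * κ + ((1 / 2 + ξ) * (1 / 2 - κ) + (1 / 2 - ξ) * (1 / 2 - κ))))) + (((2 / 3 - ξ) * κ + (1 / 3 + ξ) * κ) * Real.log (((2 / 3 - ξ) * κ + (1 / 3 + ξ) * κ) / (((2 / 3 - ξ) * κ + (1 / 3 + ξ) * κ + ((1 / 2 + ξ) * (1 / 2 - κ) + (1 / 2 - ξ) * (1 / 2 - κ))) * ((1 / 2 + ξ) * (1 / 2 - κ) + (1 / 2 - ξ) * (1 / 2 - κ) + ((2 / 3 - ξ) * κ + (1 / 3 + ξ) * κ)))) + ((1 / 2 + ξ) * (1 / 2 - κ) + (1 / 2 - ξ) * (1 / 2 - κ)) * Real.log (((1 / 2 + ξ) * (1 / 2 - κ) + (1 / 2 - ξ) * (1 / 2 - κ)) / (((2 / 3 - ξ) * κ + (1 / 3 + ξ) * κ + ((1 / 2 + ξ) * (1 / 2 - κ) + (1 / 2 - ξ) * (1 / 2 - κ))) * ((1 / 3 + ξ) * κ + (2 / 3 - ξ) * κ + ((1 / 2 + ξ) * (1 / 2 - κ) + (1 / 2 - ξ) * (1 / 2 - κ)))))) := by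
  have T1 : Filter.Tendsto (fun κ : ℝ => ((1 / 2 + ξ) * (1 / 2 - κ) + (1 / 2 - ξ) * (1 / 2 - κ)) * Real.log (((1 / 2 + ξ) * (1 / 2 - κ) + (1 / 2 - ξ) * (1 / 2 - κ)) / (((1 / 2 + ξ) * (1 / 2 - κ) + (1 / 2 - ξ) * (1 / 2 - κ) + ((1 / 3 + ξ) * κ + (2 / 3 - ξ) * κ)) * ((1 / 2 + ξ) * (1 / 2 - κ) + (1 / 2 - ξ) * (1 / 2 - κ) + ((2 / 3 - ξ) * κ + (1 / 3 + ξ) * κ))))) (𝓝[>] (0:ℝ)) (𝓝 (1 / 2 * Real.log 2)) :=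
    tendsto_term (fun κ : ℝ => (1 / 2 + ξ) * (1 / 2 - κ) + (1 / 2 - ξ) * (1 / 2 - κ)) (fun κ : ℝ => ((1 / 2 + ξ) * (1 / 2 - κ) + (1 / 2 - ξ) * (1 / 2 - κ) + ((1 / 3 + ξ) * κ + (2 / 3 - ξ) * κ)) * ((1 / 2 + ξ) * (1 / 2 - κ) + (1 / 2 - ξ) * (1 / 2 - κ) + ((2 / 3 - ξ) * κ + (1 / 3 + ξ) * κ))) (1 / 2) (1 / 4) 2
      (by fun_prop) (by fun_prop) (by ring) (by ring) (by norm_num) (by norm_num)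
  have T2 : Filter.Tendsto (fun κ : ℝ => ((1 / 3 + ξ) * κ + (2 / 3 - ξ) * κ) * Real.log (((1 / 3 + ξ) * κ + (2 / 3 - ξ) * κ) / (((1 / 2 + ξ) * (1 / 2 - κ) + (1 / 2 - ξ) * (1 / 2 - κ) + ((1 / 3 + ξ) * κ + (2 / 3 - ξ) * κ)) * ((1 / 3 + ξ) * κ + (2 / 3 - ξ) * κ + ((1 / 2 + ξ) * (1 / 2 - κ) + (1 / 2 - ξ) * (1 / 2 - κ)))))) (𝓝[>] (0:ℝ)) (𝓝 0) :=
    tendsto_term0 (fun κ : ℝ => (1 / 3 + ξ) * κ + (2 / 3 - ξ) * κ) (fun κ : ℝ => ((1 / 2 + ξ) * (1 / 2 - κ) + (1 / 2 - ξ) * (1 / 2 - κ) + ((1 / 3 + ξ) * κ + (2 / 3 - ξ) * κ)) * ((1 / 3 + ξ) * κ + (2 / 3 - ξ) * κ + ((1 / 2 + ξ) * (1 / 2 - κ) + (1 / 2 - ξ) * (1 / 2 - κ)))) (1 / 4)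
      (fun x => by ring) (by fun_prop) (by ring) (by norm_num)
  have T3 : Filter.Tendsto (fun κ : ℝ => ((2 / 3 - ξ) * κ + (1 / 3 + ξ) * κ) * Real.log (((2 / 3 - ξ) * κ + (1 / 3 + ξ) * κ) / (((2 / 3 - ξ) * κ + (1 / 3 + ξ) * κ + ((1 / 2 + ξ) * (1 / 2 - κ) + (1 / 2 - ξ) * (1 / 2 - κ))) * ((1 / 2 + ξ) * (1 / 2 - κ) + (1 / 2 - ξ) * (1 / 2 - κ) + ((2 / 3 - ξ) * κ + (1 / 3 + ξ) * κ))))) (𝓝[>] (0:ℝ)) (𝓝 0) :=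
    tendsto_term0 (fun κ : ℝ => (2 / 3 - ξ) * κ + (1 / 3 + ξ) * κ) (fun κ : ℝ => ((2 / 3 - ξ) * κ + (1 / 3 + ξ) * κ + ((1 / 2 + ξ) * (1 / 2 - κ) + (1 / 2 - ξ) * (1 / 2 - κ))) * ((1 / 2 + ξ) * (1 / 2 - κ) + (1 / 2 - ξ) * (1 / 2 - κ) + ((2 / 3 - ξ) * κ + (1 / 3 + ξ) * κ))) (1 / 4)
      (fun x => by ring) (by fun_prop) (by ring) (by norm_num)
  have T4 : Filter.Tendsto (fun κ : ℝ => ((1 / 2 + ξ) * (1 / 2 - κ) + (1 / 2 - ξ) * (1 / 2 - κ)) * Real.log (((1 / 2 + ξ) * (1 / 2 - κ) + (1 / 2 - ξ) * (1 / 2 - κ)) / (((2 / 3 - ξ) * κ + (1 / 3 + ξ) * κ + ((1 / 2 + ξ) * (1 / 2 - κ) + (1 / 2 - ξ) * (1 / 2 - κ))) * ((1 / 3 + ξ) * κ + (2 / 3 - ξ) * κ + ((1 / 2 + ξ) * (1 / 2 - κ) + (1 / 2 - ξ) * (1 / 2 - κ)))))) (𝓝[>] (0:ℝ)) (𝓝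 (1 / 2 * Real.log 2)) :=
    tendsto_term (fun κ : ℝ => (1 / 2 + ξ) * (1 / 2 - κ) + (1 / 2 - ξ) * (1 / 2 - κ)) (fun κ : ℝ => ((2 / 3 - ξ) * κ + (1 / 3 + ξ) * κ + ((1 / 2 + ξ) * (1 / 2 - κ) + (1 / 2 - ξ) * (1 / 2 - κ))) * ((1 / 3 + ξ) * κ + (2 / 3 - ξ) * κ + ((1 / 2 + ξ) * (1 / 2 - κ) + (1 / 2 - ξ) * (1 / 2 - κ)))) (1 / 2) (1 / 4) 2
      (by fun_prop) (by fun_prop) (by ring) (by ring) (by norm_num) (by norm_num)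
  have S1 : Filter.Tendsto (fun κ : ℝ => ((1 / 2 + ξ) * (1 / 2 - κ) + (2 / 3 - ξ) * κ) * Real.log (((1 / 2 + ξ) * (1 / 2 - κ) + (2 / 3 - ξ) * κ) / (((1 / 2 + ξ) * (1 / 2 - κ) + (2 / 3 - ξ) * κ + ((1 / 2 - ξ) * (1 / 2 - κ) + (1 / 3 + ξ) * κ)) * ((1 / 2 + ξ) * (1 / 2 - κ) + (2 / 3 - ξ) * κ + ((1 / 3 + ξ) * κ + (1 / 2 + ξ) * (1 / 2 - κ)))))) (𝓝[>] (0:ℝ)) (𝓝 0) :=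
    tendsto_term1 (fun κ : ℝ => (1 / 2 + ξ) * (1 / 2 - κ) + (2 / 3 - ξ) * κ) (fun κ : ℝ => ((1 / 2 + ξ) * (1 / 2 - κ) + (2 / 3 - ξ) * κ + ((1 / 2 - ξ) * (1 / 2 - κ) + (1 / 3 + ξ) * κ)) * ((1 / 2 + ξ) * (1 / 2 - κ) + (2 / 3 - ξ) * κ + ((1 / 3 + ξ) * κ + (1 / 2 + ξ) * (1 / 2 - κ)))) (1 / 4 + ξ / 2)
      (by fun_prop) (by fun_prop) (by ring) (by linarith) (by ring)
  have S2 : Filter.Tendsto (fun κ : ℝ => ((1 / 2 - ξ) * (1 / 2 - κ) + (1 / 3 + ξ) * κ) * Real.log (((1 / 2 - ξ) * (1 / 2 - κ) + (1 / 3 + ξ) * κ) / (((1 / 2 + ξ) * (1 / 2 - κ) + (2 / 3 - ξ) * κ + ((1 / 2 - ξ) * (1 / 2 - κ) + (1 / 3 + ξ) * κ)) * ((1 / 2 - ξ) * (1 / 2 - κ) + (1 / 3 + ξ) * κ + ((2 / 3 - ξ) * κ + (1 / 2 - ξ) * (1 / 2 - κ)))))) (𝓝[>] (0:ℝ)) (𝓝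 0) :=
    tendsto_term1 (fun κ : ℝ => (1 / 2 - ξ) * (1 / 2 - κ) + (1 / 3 + ξ) * κ) (fun κ : ℝ => ((1 / 2 + ξ) * (1 / 2 - κ) + (2 / 3 - ξ) * κ + ((1 / 2 - ξ) * (1 / 2 - κ) + (1 / 3 + ξ) * κ)) * ((1 / 2 - ξ) * (1 / 2 - κ) + (1 / 3 + ξ) * κ + ((2 / 3 - ξ) * κ + (1 / 2 - ξ) * (1 / 2 - κ)))) (1 / 4 - ξ / 2)
      (by fun_prop) (by fun_prop) (by ring) (by linarith) (by ring)
  have S3 : Filter.Tendsto (fun κ : ℝ => ((1 / 3 + ξ) * κ + (1 / 2 + ξ) * (1 / 2 - κ)) * Real.log (((1 / 3 + ξ) * κ + (1 / 2 + ξ) * (1 / 2 - κ)) / (((1 / 3 + ξ) * κ + (1 / 2 + ξ) * (1 / 2 - κ) + ((2 / 3 - ξ) * κ + (1 / 2 - ξ) * (1 / 2 - κ))) * ((1 / 2 + ξ) * (1 / 2 - κ) + (2 / 3 - ξ) * κ + ((1 / 3 + ξ) * κ + (1 / 2 + ξ) * (1 / 2 - κ)))))) (𝓝[>] (0:ℝ))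 (𝓝 0) :=
    tendsto_term1 (fun κ : ℝ => (1 / 3 + ξ) * κ + (1 / 2 + ξ) * (1 / 2 - κ)) (fun κ : ℝ => ((1 / 3 + ξ) * κ + (1 / 2 + ξ) * (1 / 2 - κ) + ((2 / 3 - ξ) * κ + (1 / 2 - ξ) * (1 / 2 - κ))) * ((1 / 2 + ξ) * (1 / 2 - κ) + (2 / 3 - ξ) * κ + ((1 / 3 + ξ) * κ + (1 / 2 + ξ) * (1 / 2 - κ)))) (1 / 4 + ξ / 2)
      (by fun_prop) (by fun_prop) (by ring) (by linarith) (by ring)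
  have S4 : Filter.Tendsto (fun κ : ℝ => ((2 / 3 - ξ) * κ + (1 / 2 - ξ) * (1 / 2 - κ)) * Real.log (((2 / 3 - ξ) * κ + (1 / 2 - ξ) * (1 / 2 - κ)) / (((1 / 3 + ξ) * κ + (1 / 2 + ξ) * (1 / 2 - κ) + ((2 / 3 - ξ) * κ + (1 / 2 - ξ) * (1 / 2 - κ))) * ((1 / 2 - ξ) * (1 / 2 - κ) + (1 / 3 + ξ) * κ + ((2 / 3 - ξ) * κ + (1 / 2 - ξ) * (1 / 2 - κ)))))) (𝓝[>] (0:ℝ)) (𝓝 0) :=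
    tendsto_term1 (fun κ : ℝ => (2 / 3 - ξ) * κ + (1 / 2 - ξ) * (1 / 2 - κ)) (fun κ : ℝ => ((1 / 3 + ξ) * κ + (1 / 2 + ξ) * (1 / 2 - κ) + ((2 / 3 - ξ) * κ + (1 / 2 - ξ) * (1 / 2 - κ))) * ((1 / 2 - ξ) * (1 / 2 - κ) + (1 / 3 + ξ) * κ + ((2 / 3 - ξ) * κ + (1 / 2 - ξ) * (1 / 2 - κ)))) (1 / 4 - ξ / 2)
      (by fun_prop) (by fun_prop) (by ring) (by linarith) (by ring)
  have HR : Filter.Tendsto (fun κ : ℝ => ((1 / 2 + ξ) * (1 / 2 - κ) + (1 / 2 - ξ) * (1 / 2 - κ)) * Real.log (((1 / 2 + ξ) * (1 / 2 - κ) + (1 / 2 - ξ) * (1 / 2 - κ)) / (((1 / 2 + ξ) * (1 / 2 - κ) + (1 / 2 - ξ) * (1 / 2 - κ) + ((1 / 3 + ξ) * κ + (2 / 3 - ξ) * κ)) * ((1 / 2 + ξ) * (1 / 2 - κ) + (1 / 2 - ξ) * (1 / 2 - κ) + ((2 / 3 - ξ) * κ + (1 / 3 + ξ) * κ)))) + ((1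 / 3 + ξ) * κ + (2 / 3 - ξ) * κ) * Real.log (((1 / 3 + ξ) * κ + (2 / 3 - ξ) * κ) / (((1 / 2 + ξ) * (1 / 2 - κ) + (1 / 2 - ξ) * (1 / 2 - κ) + ((1 / 3 + ξ) * κ + (2 / 3 - ξ) * κ)) * ((1 / 3 + ξ) * κ + (2 / 3 - ξ) * κ + ((1 / 2 + ξ) * (1 / 2 - κ) + (1 / 2 - ξ) * (1 / 2 - κ))))) + (((2 / 3 - ξ) * κ + (1 / 3 + ξ) * κ) * Real.log (((2 / 3 - ξ) * κ + (1 / 3 + ξ) * κ) / (((2 / 3 - ξ) * κ + (1 / 3 + ξ) * κ + ((1 / 2 + ξ) * (1 / 2 - κ) + (1 / 2 - ξ) * (1 / 2 - κ))) * ((1 / 2 + ξ) * (1 / 2 - κ) + (1 / 2 - ξ) * (1 / 2 - κ) + ((2 / 3 - ξ) * κ + (1 / 3 + ξ) * κ)))) + ((1 / 2 + ξ) * (1 / 2 - κ) + (1 / 2 - ξ) * (1 / 2 - κ)) * Real.log (((1 / 2 + ξ) * (1 / 2 - κ) + (1 / 2 - ξ) * (1 / 2 - κ)) / (((2 / 3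 - ξ) * κ + (1 / 3 + ξ) * κ + ((1 / 2 + ξ) * (1 / 2 - κ) + (1 / 2 - ξ) * (1 / 2 - κ))) * ((1 / 3 + ξ) * κ + (2 / 3 - ξ) * κ + ((1 / 2 + ξ) * (1 / 2 - κ) + (1 / 2 - ξ) * (1 / 2 - κ)))))))
      (𝓝[>] (0:ℝ)) (𝓝 (1 / 2 * Real.log 2 + 0 + (0 + 1 / 2 * Real.log 2))) :=
    (T1.add T2).add (T3.add T4)
  have HL : Filter.Tendsto (fun κ : ℝ => ((1 / 2 + ξ) * (1 / 2 - κ) + (2 / 3 - ξ) * κ) * Real.log (((1 / 2 + ξ) * (1 / 2 - κ) + (2 / 3 - ξ) * κ) / (((1 / 2 + ξ) * (1 / 2 - κ) + (2 / 3 - ξ) * κ + ((1 / 2 - ξ) * (1 / 2 - κ) + (1 / 3 + ξ) * κ)) * ((1 / 2 + ξ) * (1 / 2 - κ) + (2 / 3 - ξ) * κ + ((1 / 3 + ξ) * κ + (1 / 2 + ξ) * (1 / 2 - κ))))) + ((1 / 2 - ξ) * (1 / 2 - κ) + (1 / 3 + ξ) * κ) * Real.log (((1 / 2 - ξ) * (1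 / 2 - κ) + (1 / 3 + ξ) * κ) / (((1 / 2 + ξ) * (1 / 2 - κ) + (2 / 3 - ξ) * κ + ((1 / 2 - ξ) * (1 / 2 - κ) + (1 / 3 + ξ) * κ)) * ((1 / 2 - ξ) * (1 / 2 - κ) + (1 / 3 + ξ) * κ + ((2 / 3 - ξ) * κ + (1 / 2 - ξ) * (1 / 2 - κ))))) + (((1 / 3 + ξ) * κ + (1 / 2 + ξ) * (1 / 2 - κ)) * Real.log (((1 / 3 + ξ) * κ + (1 / 2 + ξ) * (1 / 2 - κ)) / (((1 / 3 + ξ) * κ + (1 / 2 + ξ) * (1 / 2 - κ) + ((2 / 3 - ξ) * κ + (1 / 2 - ξ) * (1 / 2 - κ))) * ((1 / 2 + ξ) * (1 / 2 - κ) + (2 / 3 - ξ) * κ + ((1 / 3 + ξ) * κ + (1 / 2 + ξ) * (1 / 2 - κ))))) + ((2 / 3 - ξ) * κ + (1 / 2 - ξ) * (1 / 2 - κ)) * Real.log (((2 / 3 - ξ) * κ + (1 / 2 - ξ) * (1 / 2 - κ)) / (((1 / 3 + ξ) * κ + (1 / 2 + ξ) * (1 / 2 - κ) + ((2 / 3 -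 ξ) * κ + (1 / 2 - ξ) * (1 / 2 - κ))) * ((1 / 2 - ξ) * (1 / 2 - κ) + (1 / 3 + ξ) * κ + ((2 / 3 - ξ) * κ + (1 / 2 - ξ) * (1 / 2 - κ)))))))
      (𝓝[>] (0:ℝ)) (𝓝 (0 + 0 + (0 + 0))) :=
    (S1.add S2).add (S3.add S4)
  have H := HR.sub HL
  rw [show (1 / 2 * Real.log 2 + 0 + (0 + 1 / 2 * Real.log 2)) - (0 + 0 + (0 + 0)) = Real.log 2
    from by ring] at H
  have hev := H.eventually (eventually_gt_nhds (Real.log_pos (by norm_num)))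
  rw [Filter.eventually_iff] at hev
  obtain ⟨u, hu, hsub⟩ := mem_nhdsGT_iff_exists_Ioo_subset.mp hev
  refine ⟨min u (1 / 2), ⟨lt_min hu (by norm_num), min_le_right _ _⟩, fun κ hκ => ?_⟩
  have h5 := hsub ⟨hκ.1, lt_of_lt_of_le hκ.2 (min_le_left _ _)⟩
  simp only [Set.mem_setOf_eq] at h5
  linarith [h5]

/-- For the parameterized distribution `P` on `{0,1}³`, `I(P_{2,3}) = I(P_{1,3})` for all
`(ξ,κ) ∈ (0,1/3)×(0,1/2)`, and for sufficiently small `κ > 0`, `I(P_{1,2}) > I(P_{2,3})`. -/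
theorem stmt_18 (ξ : ℝ) (hξ : ξ ∈ Set.Ioo (0 : ℝ) (1 / 3)) :
    let P : ℝ → Bool → Bool → Bool → ℝ := fun κ x1 x2 x3 =>
      if x1 = x2 then
        (if x3 then (1 / 2 + ξ) * (1 / 2 - κ) else (1 / 2 - ξ) * (1 / 2 - κ))
      else
        (if x3 = x1 then (1 / 3 + ξ) * κ else (2 / 3 - ξ) * κ);
    let P12 : ℝ → Bool → Bool → ℝ := fun κ a b => ∑ c, P κ a b c;
    let P13 : ℝ → Bool → Bool → ℝ := fun κ a c => ∑ b, P κ a b c;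
    let P23 : ℝ → Bool → Bool → ℝ := fun κ b c => ∑ a, P κ a b c;
    let MI : (Bool → Bool → ℝ) → ℝ := fun R =>
      ∑ a, ∑ b, R a b * Real.log (R a b / ((∑ b', R a b') * (∑ a', R a' b)));
    (∀ κ ∈ Set.Ioo (0 : ℝ) (1 / 2), MI (P23 κ) = MI (P13 κ)) ∧
    (∃ κ0 ∈ Set.Ioc (0 : ℝ) (1 / 2),
      ∀ κ ∈ Set.Ioo (0 : ℝ) κ0, MI (P12 κ) > MI (P23 κ)) := by
  intro P P12 P13 P23 MI
  constructor
  · intro κ hκ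
    simp only [P, P13, P23, MI, Fintype.sum_bool]
    norm_num
    ring_nf
  · obtain ⟨κ0, hκ0, hall⟩ := key_lemma ξ hξ.1 hξ.2
    refine ⟨κ0, hκ0, fun κ hκ => ?_⟩
    have h5 := hall κ hκ
    simp only [P, P12, P23, MI, Fintype.sum_bool]
    norm_num
    linarith [h5]
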